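/- Under the MHR assumption: if t < t' in T, q, q' ∈ Q, η(q,t) = 0 and η(q',t') = 0, then q' < q. Consequently the threshold function λ is nonincreasing on T and strictly decreasing on the set {t ∈ T : q̲ < λ(t) < q̄}. -/
import Mathlib


open MeasureTheory Set

theorem stmt_3
    (tlo thi qlo qhi : ℝ) (htT : tlo < thi) (hqQ : qlo < qhi)
    (F f d : ℝ → ℝ)
    (hF : ∀ t ∈ Icc tlo thi, HasDerivAt F (f t) t)
    (hfpos : ∀ t ∈ Icc tlo thi, 0 < f t)
    (hF0 : F tlo = 0) (hF1 : F thi = 1)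
    (hdDef : ∀ t ∈ Icc tlo thi, d t = (1 - F t) / f t)
    (d' : ℝ → ℝ)
    (hdDeriv : ∀ t ∈ Icc tlo thi, HasDerivAt d (d' t) t)
    (hMHR : ∀ t ∈ Icc tlo thi, d' t ≤ 0)
    (α α' : ℝ → ℝ)
    (hα : ∀ q ∈ Icc qlo qhi, HasDerivAt α (α' q) q)
    (hαpos : ∀ q ∈ Icc qlo qhi, 0 < α q)
    (hα'pos : ∀ q ∈ Icc qlo qhi, 0 < α' q)
    (r : ℝ) (hr : 0 < r)
    (hlow : α qlo * tlo < r) (hhigh : r < α qhi * thi)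
    (η : ℝ → ℝ → ℝ)
    (hη : ∀ q t, η q t = α q * (t - d t) - r)
    (lam : ℝ → ℝ)
    (hlamQ : ∀ t ∈ Icc tlo thi, lam t ∈ Icc qlo qhi)
    (hlamLo : ∀ t ∈ Icc tlo thi, (∀ q ∈ Icc qlo qhi, 0 < η q t) → lam t = qlo)
    (hlamMid : ∀ t ∈ Icc tlo thi, ∀ q0 ∈ Icc qlo qhi, η q0 t = 0 → lam t = q0)
    (hlamHi : ∀ t ∈ Icc tlo thi, (∀ q ∈ Icc qlo qhi, η q t < 0) → lam t = qhi)
    :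
    (∀ t ∈ Icc tlo thi, ∀ t' ∈ Icc tlo thi, ∀ q ∈ Icc qlo qhi, ∀ q' ∈ Icc qlo qhi,
        t < t' → η q t = 0 → η q' t' = 0 → q' < q) ∧
      AntitoneOn lam (Icc tlo thi) ∧
      StrictAntiOn lam {t | t ∈ Icc tlo thi ∧ qlo < lam t ∧ lam t < qhi} := by

  -- g(t) = t - d t is strictly increasing on [tlo, thi]
  have hgmono : StrictMonoOn (fun t => t - d t) (Icc tlo thi) := by
    apply strictMonoOn_of_deriv_pos (convex_Icc _ _)
    · intro t ht
      exact (((hasDerivAt_id t).sub (hdDeriv t ht)).continuousAt).continuousWithinAt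
    · intro t ht
      rw [interior_Icc] at ht
      have h : deriv (fun t => t - d t) t = 1 - d' t :=
        ((hasDerivAt_id t).sub (hdDeriv t (Ioo_subset_Icc_self ht))).deriv
      rw [h]
      have := hMHR t (Ioo_subset_Icc_self ht)
      linarith
  have hαmono : MonotoneOn α (Icc qlo qhi) := by
    apply (strictMonoOn_of_deriv_pos (convex_Icc _ _) ?_ ?_).monotoneOn
    · intro q hq; exact (hα q hq).continuousAt.continuousWithinAt
    · intro q hq
      rw [interior_Icc] at hq
      rw [(hα q (Ioo_subset_Icc_self hq)).deriv]
      exact hα'pos q (Ioo_subset_Icc_self hq)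
  have hqloI : qlo ∈ Icc qlo qhi := left_mem_Icc.mpr hqQ.le
  have hqhiI : qhi ∈ Icc qlo qhi := right_mem_Icc.mpr hqQ.le
  have key : ∀ t ∈ Icc tlo thi, ∀ t' ∈ Icc tlo thi, ∀ q ∈ Icc qlo qhi, ∀ q' ∈ Icc qlo qhi,
      t < t' → η q t = 0 → η q' t' = 0 → q' < q := by
    intro t ht t' ht' q hq q' hq' htt h1 h2
    rw [hη] at h1 h2
    have hgt := hgmono ht ht' htt
    simp only [] at hgt
    have hαq := hαpos q hq
    have hαq' := hαpos q' hq'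
    have hgpos : 0 < t - d t := by nlinarith
    have hlt : α q' < α q := by nlinarith
    by_contra hle
    push_neg at hle
    exact absurd (hαmono hq hq' hle) (by linarith)
  have tri : ∀ t ∈ Icc tlo thi, (∃ q0 ∈ Icc qlo qhi, η q0 t = 0) ∨
      (∀ q ∈ Icc qlo qhi, 0 < η q t) ∨ (∀ q ∈ Icc qlo qhi, η q t < 0) := by
    intro t ht
    rcases lt_trichotomy (η qlo t) 0 with h1 | h1 | h1
    · rcases lt_trichotomy (η qhi t) 0 with h2 | h2 | h2
      · right; right
        intro q hq
        rw [hη] at h1 h2 ⊢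
        rcases le_or_gt (t - d t) 0 with hg0 | hg0
        · have := hαpos q hq; nlinarith
        · have := hαmono hq hqhiI hq.2; nlinarith
      · exact Or.inl ⟨qhi, hqhiI, h2⟩
      · left
        have hηt : (fun q => η q t) = fun q => α q * (t - d t) - r :=
          funext fun q => hη q t
        have hcont : ContinuousOn (fun q => η q t) (Icc qlo qhi) := by
          rw [hηt]
          have hca : ContinuousOn α (Icc qlo qhi) :=
            fun q hq => (hα q hq).continuousAt.continuousWithinAt
          exact (hca.mul continuousOn_const).sub continuousOn_const
        have h0 : (0 : ℝ) ∈ Icc (η qlo t) (η qhi t) := ⟨h1.le, h2.le⟩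
        obtain ⟨q0, hq0, hval⟩ := intermediate_value_Icc hqQ.le hcont h0
        exact ⟨q0, hq0, hval⟩
    · exact Or.inl ⟨qlo, hqloI, h1⟩
    · right; left
      intro q hq
      rw [hη] at h1 ⊢
      have hαlo := hαpos qlo hqloI
      have hg0 : 0 < t - d t := by nlinarith
      have := hαmono hqloI hq hq.1
      nlinarith
  have hanti : AntitoneOn lam (Icc tlo thi) := by
    intro t ht t' ht' hle
    rcases eq_or_lt_of_le hle with rfl | htt
    · exact le_refl _
    have hgt := hgmono ht ht' htt
    simp only [] at hgt
    rcases tri t ht with ⟨q0, hq0, hz⟩ | hA | hC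
    · rcases tri t' ht' with ⟨q0', hq0', hz'⟩ | hA' | hC'
      · rw [hlamMid t ht q0 hq0 hz, hlamMid t' ht' q0' hq0' hz']
        exact (key t ht t' ht' q0 hq0 q0' hq0' htt hz hz').le
      · rw [hlamLo t' ht' hA']
        exact (hlamQ t ht).1
      · rw [hlamHi t' ht' hC', hlamMid t ht q0 hq0 hz]
        have h1 := hz; rw [hη] at h1
        have h2 := hC' qhi hqhiI; rw [hη] at h2
        have hα0 := hαpos q0 hq0
        have hαh := hαpos qhi hqhiI
        have hgpos : 0 < t - d t := by nlinarith
        have hlt : α qhi < α q0 := by nlinarith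
        by_contra hcon
        push_neg at hcon
        exact absurd (hαmono hq0 hqhiI hcon.le) (by linarith)
    · rcases tri t' ht' with ⟨q0', hq0', hz'⟩ | hA' | hC'
      · exfalso
        have h1 := hA q0' hq0'; rw [hη] at h1
        have h2 := hz'; rw [hη] at h2
        have := hαpos q0' hq0'
        nlinarith
      · rw [hlamLo t ht hA, hlamLo t' ht' hA']
      · exfalso
        have h1 := hA qhi hqhiI; rw [hη] at h1
        have h2 := hC' qhi hqhiI; rw [hη] at h2
        have := hαpos qhi hqhiI
        nlinarith
    · rw [hlamHi t ht hC]
      exact (hlamQ t' ht').2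
  refine ⟨key, hanti, ?_⟩
  intro t ht t' ht' htt
  obtain ⟨htI, hlo, hhi⟩ := ht
  obtain ⟨htI', hlo', hhi'⟩ := ht'
  rcases tri t htI with ⟨q0, hq0, hz⟩ | hA | hC
  · rcases tri t' htI' with ⟨q0', hq0', hz'⟩ | hA' | hC'
    · rw [hlamMid t htI q0 hq0 hz, hlamMid t' htI' q0' hq0' hz']
      exact key t htI t' htI' q0 hq0 q0' hq0' htt hz hz'
    · exact absurd (hlamLo t' htI' hA') hlo'.ne'
    · exact absurd (hlamHi t' htI' hC') hhi'.ne
  · exact absurd (hlamLo t htI hA) hlo.ne'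
  · exact absurd (hlamHi t htI hC) hhi.ne
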